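/- Let A be a bounded distributive lattice and κ an infinite regular cardinal. Then every relative annihilator of A belongs to BL_κ A ∩ DM A (i.e., every relative annihilator is a normal ideal of A lying in the sub-κ-frame of BL A generated by the principal D-ideals) if and only if pH A ⊆ BL_κ A ∩ DM A. -/

import Mathlib

open Cardinal

section Defs

variable {A : Type*} [SemilatticeInf A]

/-- `S ⊆ A` is admissible, with distributive join `x`: the join of `S` is `x` and
for every `a`, `a ⊓ x` is the join of `{a ⊓ s : s ∈ S}`. -/
def IsDistJoin (S : Set A) (x : A) : Prop :=
  IsLUB S x ∧ ∀ a : A, IsLUB ((fun s => a ⊓ s) '' S) (a ⊓ x)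

/-- A D-ideal of the meet-semilattice `A`: a downset closed under joins of
admissible subsets. -/
def IsDIdeal (E : Set A) : Prop :=
  IsLowerSet E ∧ ∀ S : Set A, S ⊆ E → ∀ x : A, IsDistJoin S x → x ∈ E

/-- `J` is the join of the family `T` in the Bruns–Lakser completion `BL A`:
the least D-ideal containing `⋃₀ T`. -/
def IsBLJoin (T : Set (Set A)) (J : Set A) : Prop :=
  IsDIdeal J ∧ ⋃₀ T ⊆ J ∧ ∀ E : Set A, IsDIdeal E → ⋃₀ T ⊆ E → J ⊆ E

/-- A family of D-ideals closed under finite meets (intersections, including the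
top `Set.univ` of `BL A`) and under κ-joins computed in `BL A`. -/
def BLClosed (κ : Cardinal) (C : Set (Set A)) : Prop :=
  Set.univ ∈ C ∧ (∀ E ∈ C, ∀ F ∈ C, E ∩ F ∈ C) ∧
    ∀ T : Set (Set A), T ⊆ C → #T < κ → ∀ J : Set A, IsBLJoin T J → J ∈ C

/-- The sub-κ-frame of `BL A` generated by `G`: the smallest subset of `BL A`
containing `G` and closed under finite meets and κ-joins computed in `BL A`. -/
def BLKappa (κ : Cardinal) (G : Set (Set A)) : Set (Set A) :=
  ⋂₀ {C : Set (Set A) | G ⊆ C ∧ C ⊆ {E : Set A | IsDIdeal E} ∧ BLClosed κ C}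

/-- A normal ideal: a downset `N` with `N = Nᵘˡ`. -/
def IsNormalIdeal (N : Set A) : Prop :=
  IsLowerSet N ∧ N = lowerBounds (upperBounds N)

/-- The relative annihilator `⟨a,b⟩ = {x : a ⊓ x ≤ b}`. -/
def RelAnn (a b : A) : Set A := {x : A | a ⊓ x ≤ b}

end Defs

/-- κ-completeness: every κ-join exists. -/
def IsKappaComplete (A : Type*) [Preorder A] (κ : Cardinal) : Prop :=
  ∀ S : Set A, #S < κ → ∃ x : A, IsLUB S x

/-- κJD: every existing κ-join is a distributive join. -/
def IsKappaJD (A : Type*) [SemilatticeInf A] (κ : Cardinal) : Prop :=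
  ∀ S : Set A, #S < κ → ∀ x : A, IsLUB S x → IsDistJoin S x

/-- A κ-frame: a κ-complete and κJD meet-semilattice. -/
def IsKappaFrame (A : Type*) [SemilatticeInf A] (κ : Cardinal) : Prop :=
  IsKappaComplete A κ ∧ IsKappaJD A κ

/-- A family of subsets of `α` closed under binary intersections is a
meet-semilattice in the inherited (inclusion) order, meets being intersections. -/
def subSemilatticeInf {α : Type*} (B : Set (Set α))
    (hmeet : ∀ E ∈ B, ∀ F ∈ B, E ∩ F ∈ B) : SemilatticeInf ↥B :=
  { (inferInstance : PartialOrder ↥B) with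
    inf := fun E F => ⟨E.1 ∩ F.1, hmeet _ E.2 _ F.2⟩
    inf_le_left := fun _ _ _ hx => hx.1
    inf_le_right := fun _ _ _ hx => hx.2
    le_inf := fun _ _ _ h1 h2 _ hx => ⟨h1 hx, h2 hx⟩ }

/-- The closure conditions defining the proHeyting extension inside `BL A`:
containing every relative annihilator, the top and bottom of `BL A`, and closed
under binary meets (intersections) and binary joins of `BL A`. -/
def PHClosed {A : Type*} [SemilatticeInf A] (C : Set (Set A)) : Prop :=
  (∀ a b : A, RelAnn a b ∈ C) ∧
  Set.univ ∈ C ∧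
  (∀ J : Set A, IsBLJoin (∅ : Set (Set A)) J → J ∈ C) ∧
  (∀ E ∈ C, ∀ F ∈ C, E ∩ F ∈ C) ∧
  (∀ E ∈ C, ∀ F ∈ C, ∀ J : Set A, IsBLJoin {E, F} J → J ∈ C)

/-- The proHeyting extension `pH A`: the bounded sublattice of `BL A` generated by
the relative annihilators of `A`. -/
def pHExt (A : Type*) [SemilatticeInf A] : Set (Set A) :=
  ⋂₀ {C : Set (Set A) | C ⊆ {E : Set A | IsDIdeal E} ∧ PHClosed C}

theorem pHExt_inter_mem {A : Type*} [SemilatticeInf A] :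
    ∀ E ∈ pHExt A, ∀ F ∈ pHExt A, E ∩ F ∈ pHExt A := by
  intro E hE F hF
  rw [pHExt, Set.mem_sInter] at hE hF ⊢
  intro C hC
  exact hC.2.2.2.2.1 E (hE C hC) F (hF C hC)

/-- `pH A` with its inherited order is a meet-semilattice. -/
instance pHExtSemilatticeInf (A : Type*) [SemilatticeInf A] :
    SemilatticeInf ↥(pHExt A) :=
  subSemilatticeInf (pHExt A) pHExt_inter_mem

section Aux

variable {A : Type*}

lemma normal_isDIdeal [SemilatticeInf A] {N : Set A} (h : IsNormalIdeal N) :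
    IsDIdeal N := by
  refine ⟨h.1, fun S hS x hx => ?_⟩
  rw [h.2]
  exact fun u hu => hx.1.2 fun s hs => hu (hS hs)

lemma iic_isDIdeal [SemilatticeInf A] (a : A) : IsDIdeal (Set.Iic a) :=
  ⟨fun _ _ h h' => le_trans h h', fun S hS x hx => hx.1.2 fun s hs => hS hs⟩

lemma iic_isNormal [SemilatticeInf A] (a : A) : IsNormalIdeal (Set.Iic a) := by
  refine ⟨fun _ _ h h' => le_trans h h', Set.Subset.antisymm
    (fun x hx u hu => le_trans hx (hu le_rfl)) (fun x hx => hx (fun y hy => hy))⟩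

lemma normal_ul [SemilatticeInf A] (M : Set A) :
    IsNormalIdeal (lowerBounds (upperBounds M)) := by
  have hub : upperBounds (lowerBounds (upperBounds M)) = upperBounds M :=
    Set.Subset.antisymm (fun u hu m hm => hu fun v hv => hv hm)
      (fun u hu x hx => hx hu)
  exact ⟨fun x y hyx hx u hu => le_trans hyx (hx hu), by rw [hub]⟩

lemma normal_inter [SemilatticeInf A] {N M : Set A} (hN : IsNormalIdeal N)
    (hM : IsNormalIdeal M) : IsNormalIdeal (N ∩ M) := by
  refine ⟨fun x y hyx hx => ⟨hN.1 hyx hx.1, hM.1 hyx hx.2⟩, Set.Subset.antisymm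
    (fun x hx u hu => hu hx) ?_⟩
  intro x hx
  constructor
  · rw [hN.2]; exact fun u hu => hx fun y hy => hu hy.1
  · rw [hM.2]; exact fun u hu => hx fun y hy => hu hy.2

lemma distJoin_pair [DistribLattice A] (e f : A) : IsDistJoin {e, f} (e ⊔ f) := by
  refine ⟨isLUB_pair, fun a => ?_⟩
  rw [Set.image_pair, inf_sup_left]
  exact isLUB_pair

lemma dIdeal_sup_mem [DistribLattice A] {G : Set A} (hG : IsDIdeal G) {e f : A}
    (he : e ∈ G) (hf : f ∈ G) : e ⊔ f ∈ G := by
  refine hG.2 {e, f} ?_ _ (distJoin_pair e f)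
  rintro s (rfl | rfl) <;> assumption

lemma distJoin_empty [DistribLattice A] [BoundedOrder A] :
    IsDistJoin (∅ : Set A) ⊥ := by
  refine ⟨isLUB_empty, fun a => ?_⟩
  simpa using (isLUB_empty : IsLUB (∅ : Set A) ⊥)

lemma bot_mem_normal [SemilatticeInf A] [OrderBot A] {N : Set A}
    (hN : IsNormalIdeal N) : ⊥ ∈ N := by
  rw [hN.2]; exact fun u _ => bot_le

/-- Key lemma: if all relative annihilators are normal, then the BL-join of two
normal ideals is `(E ∪ F)ᵘˡ`. -/
lemma blJoin_pair_eq [DistribLattice A] [BoundedOrder A]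
    (hRel : ∀ a b : A, IsNormalIdeal (RelAnn a b))
    {E F J : Set A} (hE : IsNormalIdeal E) (hF : IsNormalIdeal F)
    (hJ : IsBLJoin {E, F} J) : J = lowerBounds (upperBounds (E ∪ F)) := by
  have hUn : ⋃₀ ({E, F} : Set (Set A)) = E ∪ F := Set.sUnion_pair E F
  refine Set.Subset.antisymm ?_ ?_
  · refine hJ.2.2 _ (normal_isDIdeal (normal_ul _)) ?_
    rw [hUn]
    exact fun y hy v hv => hv hy
  · intro x hx
    have hbE : ⊥ ∈ E := bot_mem_normal hE
    have hbF : ⊥ ∈ F := bot_mem_normal hF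
    have hEJ : E ⊆ J := fun y hy => hJ.2.1 (by rw [hUn]; exact Or.inl hy)
    have hFJ : F ⊆ J := fun y hy => hJ.2.1 (by rw [hUn]; exact Or.inr hy)
    set S : Set A := {y | ∃ e ∈ E, ∃ f ∈ F, y = x ⊓ (e ⊔ f)} with hSdef
    -- x belongs to every relative annihilator containing E ∪ F
    have hkey : ∀ c u : A, (E ∪ F) ⊆ RelAnn c u → x ∈ RelAnn c u := by
      intro c u hsub
      have : x ∈ lowerBounds (upperBounds (RelAnn c u)) :=
        fun v hv => hx fun y hy => hv (hsub hy)
      rwa [← (hRel c u).2] at this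
    refine hJ.1.2 S ?_ x ⟨⟨?_, ?_⟩, fun a => ⟨?_, ?_⟩⟩
    · rintro y ⟨e, he, f, hf, rfl⟩
      rw [inf_sup_left]
      exact dIdeal_sup_mem hJ.1 (hEJ (hE.1 inf_le_right he)) (hFJ (hF.1 inf_le_right hf))
    · rintro y ⟨e, he, f, hf, rfl⟩
      exact inf_le_left
    · intro u hu
      have hsub : (E ∪ F) ⊆ RelAnn x u := by
        rintro y (hy | hy)
        · have := hu ⟨y, hy, ⊥, hbF, rfl⟩
          simpa [RelAnn] using this
        · have := hu ⟨⊥, hbE, y, hy, rfl⟩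
          simpa [RelAnn] using this
      have := hkey x u hsub
      simpa [RelAnn] using this
    · rintro y ⟨z, ⟨e, he, f, hf, rfl⟩, rfl⟩
      exact inf_le_inf_left a inf_le_left
    · intro u hu
      have hsub : (E ∪ F) ⊆ RelAnn (a ⊓ x) u := by
        rintro y (hy | hy)
        · have := hu ⟨x ⊓ (y ⊔ ⊥), ⟨y, hy, ⊥, hbF, rfl⟩, rfl⟩
          simpa [RelAnn, inf_assoc] using this
        · have := hu ⟨x ⊓ (⊥ ⊔ y), ⟨⊥, hbE, y, hy, rfl⟩, rfl⟩
          simpa [RelAnn, inf_assoc] using this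
      have := hkey (a ⊓ x) u hsub
      simpa [RelAnn, inf_assoc] using this

end Aux

/-- For a bounded distributive lattice `A` and an infinite regular
cardinal `κ`: every relative annihilator of `A` belongs to `BL_κ A ∩ DM A` (it is a
normal ideal lying in the sub-κ-frame of `BL A` generated by the principal D-ideals)
iff `pH A ⊆ BL_κ A ∩ DM A`. -/
theorem relAnn_mem_BLKappa_inter_DM_iff (A : Type*) [DistribLattice A] [BoundedOrder A]
    (κ : Cardinal) (hκ : κ.IsRegular) :
    (∀ a b : A, RelAnn a b ∈
        BLKappa κ (Set.range (Set.Iic : A → Set A)) ∩ {N : Set A | IsNormalIdeal N}) ↔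
      pHExt A ⊆
        BLKappa κ (Set.range (Set.Iic : A → Set A)) ∩ {N : Set A | IsNormalIdeal N} := by
  set K := BLKappa κ (Set.range (Set.Iic : A → Set A)) with hK
  constructor
  · intro h
    intro X hX
    have hannK : ∀ a b : A, RelAnn a b ∈ K := fun a b => (h a b).1
    have hannN : ∀ a b : A, IsNormalIdeal (RelAnn a b) := fun a b => (h a b).2
    refine Set.mem_sInter.mp hX _ ⟨fun E hE => normal_isDIdeal hE.2, ?_, ?_, ?_, ?_, ?_⟩
    · exact h
    · -- Set.univ
      refine ⟨Set.mem_sInter.mpr fun C hC => hC.2.2.1, fun _ _ _ _ => trivial,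
        Set.Subset.antisymm (fun x _ u hu => hu trivial) (Set.subset_univ _)⟩
    · -- bottom
      intro J hJ
      have hJeq : J = Set.Iic (⊥ : A) := by
        refine Set.Subset.antisymm (hJ.2.2 _ (iic_isDIdeal ⊥) (by simp)) ?_
        intro x hx
        have hb : (⊥ : A) ∈ J :=
          hJ.1.2 ∅ (Set.empty_subset _) ⊥ distJoin_empty
        exact hJ.1.1 hx hb
      rw [hJeq]
      exact ⟨Set.mem_sInter.mpr fun C hC => hC.1 ⟨⊥, rfl⟩, iic_isNormal ⊥⟩
    · -- intersections
      intro E hE F hF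
      exact ⟨Set.mem_sInter.mpr fun C hC =>
        hC.2.2.2.1 E (Set.mem_sInter.mp hE.1 _ hC) F (Set.mem_sInter.mp hF.1 _ hC),
        normal_inter hE.2 hF.2⟩
    · -- binary joins
      intro E hE F hF J hJ
      have hcard : #({E, F} : Set (Set A)) < κ :=
        lt_of_lt_of_le ((Set.toFinite ({E, F} : Set (Set A))).lt_aleph0)
          hκ.aleph0_le
      refine ⟨Set.mem_sInter.mpr fun C hC => hC.2.2.2.2 {E, F} ?_ hcard J hJ, ?_⟩
      · rintro T (rfl | rfl)
        · exact Set.mem_sInter.mp hE.1 _ hC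
        · exact Set.mem_sInter.mp hF.1 _ hC
      · rw [blJoin_pair_eq hannN hE.2 hF.2 hJ]
        exact normal_ul _
  · intro h a b
    refine h (Set.mem_sInter.mpr fun C hC => hC.2.1 a b)
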